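/- arXiv:math/0401050 — 2 statements merged into one kernel-verified Lean document; each statement's English description precedes it below -/
import Mathlib

section
/- Let G be a group generated by elements a_1,…,a_m (m ≥ 2) which is δ-hyperbolic. Let ℓ and a be integers with 0 ≤ a ≤ ℓ and let g ∈ S_{ℓ,a}. Then the number of elements g' ∈ S_{ℓ,a} such that ‖gg'‖ ≥ 2ℓ − 4a is at least |S_{ℓ,a}| − |B_{ℓ−a+2δ}|. -/
open Filter Set

namespace GrowthRQ

variable {G : Type*} [Group G] {m : ℕ}

/-- Word norm with respect to the generators `gen i` and their inverses. -/
noncomputable def wordNorm (gen : Fin m → G) (x : G) : ℕ :=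
  sInf {n | ∃ w : List (Fin m × Bool), w.length = n ∧
    (w.map (fun p => if p.2 then gen p.1 else (gen p.1)⁻¹)).prod = x}

/-- Ball of (real) radius `r` for the word norm. -/
def ball (gen : Fin m → G) (r : ℝ) : Set G := {x | (wordNorm gen x : ℝ) ≤ r}

/-- Annulus of elements of norm in `(ℓ - a, ℓ]`. -/
def ann (gen : Fin m → G) (ℓ a : ℝ) : Set G := ball gen ℓ \ ball gen (ℓ - a)

/-- Growth exponent in base `2m-1`. (The limit exists by submultiplicativity,
so it equals the `limsup`.) -/
noncomputable def growthExponent (gen : Fin m → G) : ℝ :=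
  Filter.limsup (fun L : ℕ => Real.logb (2 * (m : ℝ) - 1) ((ball gen L).ncard) / L) Filter.atTop

/-- Gromov product with origin `e`. -/
noncomputable def gromov (gen : Fin m → G) (x y : G) : ℝ :=
  ((wordNorm gen x : ℝ) + (wordNorm gen y : ℝ) - (wordNorm gen (x⁻¹ * y) : ℝ)) / 2

/-- `δ`-hyperbolicity via the Gromov product. -/
def IsHyperbolic (gen : Fin m → G) (δ : ℝ) : Prop :=
  ∀ x y z : G, gromov gen x z ≥ min (gromov gen x y) (gromov gen y z) - δ

/-- Non-elementary: not virtually cyclic. -/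
def NonElementary (G : Type*) [Group G] : Prop :=
  ¬ ∃ H : Subgroup G, H.index ≠ 0 ∧ IsCyclic H

/-- Probability, for `N` independent uniform choices of relators in the ball of radius `ℓ`,
that the chosen tuple satisfies `P`. -/
noncomputable def quotProb (gen : Fin m → G) (ℓ N : ℕ) (P : (Fin N → G) → Prop) : ℝ :=
  (({r : Fin N → G | (∀ i, r i ∈ ball gen (ℓ : ℝ)) ∧ P r}).ncard : ℝ) /
  (({r : Fin N → G | ∀ i, r i ∈ ball gen (ℓ : ℝ)}).ncard : ℝ)

/-- Images of the generators in the quotient by the normal closure of the relators. -/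
noncomputable def quotGen (gen : Fin m → G) {N : ℕ} (r : Fin N → G) :
    Fin m → G ⧸ Subgroup.normalClosure (Set.range r) :=
  fun i => QuotientGroup.mk (gen i)


def ev (gen : Fin m → G) (w : List (Fin m × Bool)) : G :=
  (w.map (fun p => if p.2 then gen p.1 else (gen p.1)⁻¹)).prod

lemma ev_append (gen : Fin m → G) (w₁ w₂ : List (Fin m × Bool)) :
    ev gen (w₁ ++ w₂) = ev gen w₁ * ev gen w₂ := by
  simp [ev]

lemma wordNorm_le (gen : Fin m → G) {x : G} {w : List (Fin m × Bool)}
    (h : ev gen w = x) : wordNorm gen x ≤ w.length :=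
  Nat.sInf_le ⟨w, rfl, h⟩

lemma exists_word (gen : Fin m → G) (hgen : Subgroup.closure (Set.range gen) = ⊤) (x : G) :
    ∃ w, ev gen w = x := by
  have hx : x ∈ Submonoid.closure (Set.range gen ∪ (Set.range gen)⁻¹) := by
    rw [← Subgroup.closure_toSubmonoid]
    exact (by rw [hgen]; trivial : x ∈ Subgroup.closure (Set.range gen))
  obtain ⟨l, hl, hprod⟩ := Submonoid.exists_list_of_mem_closure hx
  have key : ∀ l : List G, (∀ y ∈ l, y ∈ Set.range gen ∪ (Set.range gen)⁻¹) →
      ∃ w, ev gen w = l.prod := by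
    intro l
    induction l with
    | nil => exact fun _ => ⟨[], by simp [ev]⟩
    | cons y t ih =>
      intro hl
      obtain ⟨w, hw⟩ := ih (fun z hz => hl z (List.mem_cons_of_mem _ hz))
      rcases hl y List.mem_cons_self with ⟨i, hi⟩ | ⟨i, hi⟩
      · exact ⟨(i, true) :: w, by simp [ev] at hw ⊢; rw [hi, hw]⟩
      · refine ⟨(i, false) :: w, ?_⟩
        simp [ev] at hw ⊢
        rw [hw, hi]; simp
  obtain ⟨w, hw⟩ := key l hl
  exact ⟨w, hw.trans hprod⟩

lemma wordNorm_spec (gen : Fin m → G) (hgen : Subgroup.closure (Set.range gen) = ⊤) (x : G) :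
    ∃ w : List (Fin m × Bool), w.length = wordNorm gen x ∧ ev gen w = x := by
  have hne : {n | ∃ w : List (Fin m × Bool), w.length = n ∧
      (w.map (fun p => if p.2 then gen p.1 else (gen p.1)⁻¹)).prod = x}.Nonempty := by
    obtain ⟨w, hw⟩ := exists_word gen hgen x
    exact ⟨w.length, w, rfl, hw⟩
  obtain ⟨w, hw1, hw2⟩ := Nat.sInf_mem hne
  exact ⟨w, hw1, hw2⟩

lemma wordNorm_inv_le (gen : Fin m → G) (hgen : Subgroup.closure (Set.range gen) = ⊤) (x : G) :
    wordNorm gen x⁻¹ ≤ wordNorm gen x := by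
  obtain ⟨w, hlen, hev⟩ := wordNorm_spec gen hgen x
  have hinv : ∀ w : List (Fin m × Bool),
      ev gen ((w.map (fun p => (p.1, !p.2))).reverse) = (ev gen w)⁻¹ := by
    intro w
    induction w with
    | nil => simp [ev]
    | cons p t ih =>
      rcases p with ⟨i, b⟩
      simp only [List.map_cons, List.reverse_cons, ev_append, ih]
      cases b <;> simp [ev]
  calc wordNorm gen x⁻¹ ≤ ((w.map (fun p => (p.1, !p.2))).reverse).length :=
        wordNorm_le gen (by rw [hinv, hev])
    _ = wordNorm gen x := by simp [hlen]

lemma wordNorm_inv (gen : Fin m → G) (hgen : Subgroup.closure (Set.range gen) = ⊤) (x : G) :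
    wordNorm gen x⁻¹ = wordNorm gen x :=
  le_antisymm (wordNorm_inv_le gen hgen x)
    (by simpa using wordNorm_inv_le gen hgen x⁻¹)

lemma wordNorm_mul_le (gen : Fin m → G) (hgen : Subgroup.closure (Set.range gen) = ⊤) (x y : G) :
    wordNorm gen (x * y) ≤ wordNorm gen x + wordNorm gen y := by
  obtain ⟨w1, h1, e1⟩ := wordNorm_spec gen hgen x
  obtain ⟨w2, h2, e2⟩ := wordNorm_spec gen hgen y
  calc wordNorm gen (x * y) ≤ (w1 ++ w2).length :=
        wordNorm_le gen (by rw [ev_append, e1, e2])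
    _ = _ := by simp [h1, h2]

lemma exists_prefix (gen : Fin m → G) (hgen : Subgroup.closure (Set.range gen) = ⊤)
    (x : G) {t : ℕ} (ht : t ≤ wordNorm gen x) :
    ∃ p : G, wordNorm gen p = t ∧ wordNorm gen (p⁻¹ * x) + t = wordNorm gen x := by
  obtain ⟨w, hlen, hev⟩ := wordNorm_spec gen hgen x
  set p := ev gen (w.take t) with hp
  have hsplit : ev gen (w.drop t) = p⁻¹ * x := by
    have h := ev_append gen (w.take t) (w.drop t)
    rw [List.take_append_drop, hev] at h
    rw [h, hp]; group
  have h1 : wordNorm gen p ≤ t := by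
    have := wordNorm_le gen (w := w.take t) rfl
    simpa [List.length_take, min_eq_left (hlen ▸ ht : t ≤ w.length)] using this
  have h2 : wordNorm gen (p⁻¹ * x) ≤ w.length - t := by
    have := wordNorm_le gen hsplit
    simpa [List.length_drop] using this
  have h3 : wordNorm gen x ≤ wordNorm gen p + wordNorm gen (p⁻¹ * x) := by
    have := wordNorm_mul_le gen hgen p (p⁻¹ * x)
    simpa using this
  have hwl : w.length = wordNorm gen x := hlen
  exact ⟨p, by omega, by omega⟩

lemma ball_finite (gen : Fin m → G) (hgen : Subgroup.closure (Set.range gen) = ⊤) (r : ℝ) :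
    (ball gen r).Finite := by
  apply Set.Finite.subset ((List.finite_length_le (Fin m × Bool) ⌈r⌉₊).image (ev gen))
  intro x hx
  obtain ⟨w, hlen, hev⟩ := wordNorm_spec gen hgen x
  refine ⟨w, ?_, hev⟩
  have : (wordNorm gen x : ℝ) ≤ (⌈r⌉₊ : ℝ) := le_trans hx (Nat.le_ceil r)
  have : wordNorm gen x ≤ ⌈r⌉₊ := by exact_mod_cast this
  simpa [hlen] using this


/-- in a `δ`-hyperbolic group, for `0 ≤ a ≤ ℓ` and `g ∈ S_{ℓ,a}`, the number
of `g' ∈ S_{ℓ,a}` with `‖g g'‖ ≥ 2ℓ - 4a` is at least `|S_{ℓ,a}| - |B_{ℓ-a+2δ}|`. -/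
theorem statement8 {G : Type*} [Group G] {m : ℕ} (hm : 2 ≤ m) (gen : Fin m → G)
    (hgen : Subgroup.closure (Set.range gen) = ⊤)
    (δ : ℝ) (hδ : 0 ≤ δ) (hhyp : IsHyperbolic gen δ)
    (ℓ a : ℕ) (ha : a ≤ ℓ) (g : G) (hg : g ∈ ann gen (ℓ : ℝ) (a : ℝ)) :
    (({g' ∈ ann gen (ℓ : ℝ) (a : ℝ) |
        2 * (ℓ : ℝ) - 4 * a ≤ (wordNorm gen (g * g') : ℝ)}).ncard : ℝ) ≥
      ((ann gen (ℓ : ℝ) (a : ℝ)).ncard : ℝ) - ((ball gen ((ℓ : ℝ) - a + 2 * δ)).ncard : ℝ) := by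
  classical
  have hg1 : (wordNorm gen g : ℝ) ≤ ℓ := hg.1
  have hg2 : (ℓ : ℝ) - a < wordNorm gen g := not_le.mp hg.2
  have hginv : wordNorm gen g⁻¹ = wordNorm gen g := wordNorm_inv gen hgen g
  obtain ⟨p, hkey⟩ : ∃ p : G, ∀ g' : G, g' ∈ ann gen (ℓ : ℝ) (a : ℝ) →
      (wordNorm gen (g * g') : ℝ) < 2 * ℓ - 4 * a →
      (wordNorm gen (p⁻¹ * g') : ℝ) ≤ (ℓ : ℝ) - a + 2 * δ := by
    rcases le_or_gt a (wordNorm gen g) with hcase | hcase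
    · obtain ⟨p, hp1, hp2⟩ := exists_prefix gen hgen g⁻¹ (t := a) (by rw [hginv]; exact hcase)
      refine ⟨p, fun g' hg' hbad => ?_⟩
      have hg'1 : (wordNorm gen g' : ℝ) ≤ ℓ := hg'.1
      have hg'2 : (ℓ : ℝ) - a < wordNorm gen g' := not_le.mp hg'.2
      have hyp1 := hhyp p g⁻¹ g'
      simp only [gromov, inv_inv, ge_iff_le] at hyp1
      have c1 : (wordNorm gen p : ℝ) = a := by exact_mod_cast congrArg (Nat.cast : ℕ → ℝ) hp1
      have c2 : (wordNorm gen (p⁻¹ * g⁻¹) : ℝ) + a = wordNorm gen g⁻¹ := by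
        exact_mod_cast congrArg (Nat.cast : ℕ → ℝ) hp2
      have c3 : (wordNorm gen g⁻¹ : ℝ) = wordNorm gen g := by
        exact_mod_cast congrArg (Nat.cast : ℕ → ℝ) hginv
      set X := ((wordNorm gen p : ℝ) + (wordNorm gen g⁻¹ : ℝ) - (wordNorm gen (p⁻¹ * g⁻¹) : ℝ)) / 2 with hX
      set Y := ((wordNorm gen g⁻¹ : ℝ) + (wordNorm gen g' : ℝ) - (wordNorm gen (g * g') : ℝ)) / 2 with hY
      rcases le_total X Y with h | h
      · rw [min_eq_left h] at hyp1; linarith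
      · rw [min_eq_right h] at hyp1; linarith
    · refine ⟨g⁻¹, fun g' hg' hbad => ?_⟩
      rw [inv_inv]
      have hcast : (wordNorm gen g : ℝ) < a := by exact_mod_cast hcase
      linarith
  set A := ann gen (ℓ : ℝ) (a : ℝ) with hA
  have hAfin : A.Finite := (ball_finite gen hgen ℓ).subset Set.diff_subset
  have hBfin : (ball gen ((ℓ : ℝ) - a + 2 * δ)).Finite := ball_finite gen hgen _
  set bad := {g' ∈ A | (wordNorm gen (g * g') : ℝ) < 2 * ℓ - 4 * a} with hbadset
  have hsub : bad ⊆ A := fun x hx => hx.1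
  have hgood : {g' ∈ A | 2 * (ℓ : ℝ) - 4 * a ≤ (wordNorm gen (g * g') : ℝ)} = A \ bad := by
    ext x
    simp only [hbadset, Set.mem_sep_iff, Set.mem_diff, not_and, not_lt]
    tauto
  have hinj : Set.InjOn (fun y => p⁻¹ * y) bad := fun x _ y _ h => by
    simpa using mul_left_cancel h
  have himg : (fun y => p⁻¹ * y) '' bad ⊆ ball gen ((ℓ : ℝ) - a + 2 * δ) := by
    rintro _ ⟨y, hy, rfl⟩
    exact hkey y hy.1 hy.2
  have hcard1 : bad.ncard ≤ (ball gen ((ℓ : ℝ) - a + 2 * δ)).ncard := by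
    rw [← Set.ncard_image_of_injOn hinj]
    exact Set.ncard_le_ncard himg hBfin
  have hle : bad.ncard ≤ A.ncard := Set.ncard_le_ncard hsub hAfin
  have hcard2 : ((A \ bad).ncard : ℝ) = (A.ncard : ℝ) - bad.ncard := by
    rw [Set.ncard_diff hsub (hAfin.subset hsub)]
    exact Nat.cast_sub hle
  rw [hgood, hcard2]
  have : (bad.ncard : ℝ) ≤ ((ball gen ((ℓ : ℝ) - a + 2 * δ)).ncard : ℝ) := by exact_mod_cast hcard1
  linarith


end GrowthRQ
end

section
/- Let G be a group generated by elements a_1,…,a_m (m ≥ 2) which is δ-hyperbolic. Let ℓ and a be integers with 1 ≤ a ≤ ℓ, let g, g' ∈ S_{ℓ,a} be such that x := gg' ∈ S_{2ℓ,4a}, and let h ∈ G lie on a geodesic from e to x with ‖h‖ = ⌈‖x‖/2⌉ (that is, ‖h‖ + ‖h^{-1}x‖ = ‖x‖ and ‖h‖ = ⌈‖x‖/2⌉). Then ‖g^{-1}h‖ ≤ 6a + 2δ; in particular g lies in the ball of radius 6a+2δ around h, and g' = g^{-1}x is determined by g. -/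
open Filter Set

namespace GrowthRQ

variable {G : Type*} [Group G] {m : ℕ}

lemma exists_word_s10 (gen : Fin m → G) (hgen : Subgroup.closure (Set.range gen) = ⊤) (x : G) :
    ∃ w : List (Fin m × Bool),
      (w.map (fun p => if p.2 then gen p.1 else (gen p.1)⁻¹)).prod = x := by
  have hx : x ∈ Submonoid.closure (Set.range gen ∪ (Set.range gen)⁻¹) := by
    rw [← Subgroup.closure_toSubmonoid, hgen]; trivial
  obtain ⟨l, hl, hprod⟩ := Submonoid.exists_list_of_mem_closure hx
  clear hx
  induction l generalizing x with
  | nil => exact ⟨[], hprod⟩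
  | cons y t ih =>
    obtain ⟨w, hw⟩ := ih t.prod (fun z hz => hl z (List.mem_cons_of_mem _ hz)) rfl
    have hy := hl y List.mem_cons_self
    rcases hy with ⟨i, hi⟩ | hy
    · exact ⟨(i, true) :: w, by simp [hw, hi, ← hprod]⟩
    · obtain ⟨i, hi⟩ := hy
      refine ⟨(i, false) :: w, ?_⟩
      simp only [List.map_cons, List.prod_cons, hw, if_neg Bool.false_ne_true, ← hprod]
      rw [show gen i = y⁻¹ from hi]
      simp

lemma wordNorm_set_nonempty (gen : Fin m → G) (hgen : Subgroup.closure (Set.range gen) = ⊤)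
    (x : G) : {n | ∃ w : List (Fin m × Bool), w.length = n ∧
      (w.map (fun p => if p.2 then gen p.1 else (gen p.1)⁻¹)).prod = x}.Nonempty := by
  obtain ⟨w, hw⟩ := exists_word_s10 gen hgen x
  exact ⟨w.length, w, rfl, hw⟩

lemma statement10_aux {G : Type*} [Group G] {m : ℕ} (gen : Fin m → G)
    (hgen : Subgroup.closure (Set.range gen) = ⊤)
    (δ : ℝ) (hδ : 0 ≤ δ) (hhyp : IsHyperbolic gen δ)
    (ℓ a : ℕ) (ha1 : 1 ≤ a) (ha : a ≤ ℓ)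
    (g g' h : G)
    (hg1 : (wordNorm gen g : ℝ) ≤ ℓ) (hg2 : (ℓ : ℝ) - a < wordNorm gen g)
    (hg'1 : (wordNorm gen g' : ℝ) ≤ ℓ)
    (hx1 : (wordNorm gen (g * g') : ℝ) ≤ 2 * ℓ)
    (hx2 : 2 * (ℓ : ℝ) - 4 * a < wordNorm gen (g * g'))
    (hgeo : wordNorm gen h + wordNorm gen (h⁻¹ * (g * g')) = wordNorm gen (g * g'))
    (hhalf : wordNorm gen h = ⌈(wordNorm gen (g * g') : ℝ) / 2⌉₊) :
    (wordNorm gen (g⁻¹ * h) : ℝ) ≤ 6 * a + 2 * δ := by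
  have ha1' : (1 : ℝ) ≤ a := by exact_mod_cast ha1
  have ha' : (a : ℝ) ≤ ℓ := by exact_mod_cast ha
  have key := hhyp g (g * g') h
  unfold gromov at key
  rw [inv_mul_cancel_left] at key
  have hinv : wordNorm gen ((g * g')⁻¹ * h) = wordNorm gen (h⁻¹ * (g * g')) := by
    rw [← wordNorm_inv gen hgen (h⁻¹ * (g * g'))]
    congr 1
    group
  rw [hinv] at key
  have hgeoR : (wordNorm gen h : ℝ) + (wordNorm gen (h⁻¹ * (g * g')) : ℝ)
      = (wordNorm gen (g * g') : ℝ) := by exact_mod_cast hgeo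
  have hhalfR : (wordNorm gen h : ℝ) = (⌈(wordNorm gen (g * g') : ℝ) / 2⌉₊ : ℝ) := by
    exact_mod_cast hhalf
  have hc1 : (wordNorm gen (g * g') : ℝ) / 2 ≤ (wordNorm gen h : ℝ) := by
    rw [hhalfR]; exact Nat.le_ceil _
  have hc2 : (wordNorm gen h : ℝ) < (wordNorm gen (g * g') : ℝ) / 2 + 1 := by
    rw [hhalfR]
    exact Nat.ceil_lt_add_one (by positivity)
  rcases le_total (((wordNorm gen g : ℝ) + (wordNorm gen (g * g') : ℝ)
      - (wordNorm gen g' : ℝ)) / 2)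
      (((wordNorm gen (g * g') : ℝ) + (wordNorm gen h : ℝ)
      - (wordNorm gen (h⁻¹ * (g * g')) : ℝ)) / 2) with hmm | hmm
  · rw [min_eq_left hmm] at key
    linarith
  · rw [min_eq_right hmm] at key
    linarith

/-- with `g, g' ∈ S_{ℓ,a}`, `x = g g' ∈ S_{2ℓ,4a}`, and `h` a point on a
geodesic from `e` to `x` with `‖h‖ = ⌈‖x‖/2⌉`, one has `‖g⁻¹ h‖ ≤ 6a + 2δ`; in particular
`g` lies in the ball of radius `6a+2δ` around `h`, and `g' = g⁻¹ x` is determined by `g`. -/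
theorem statement10 {G : Type*} [Group G] {m : ℕ} (hm : 2 ≤ m) (gen : Fin m → G)
    (hgen : Subgroup.closure (Set.range gen) = ⊤)
    (δ : ℝ) (hδ : 0 ≤ δ) (hhyp : IsHyperbolic gen δ)
    (ℓ a : ℕ) (ha1 : 1 ≤ a) (ha : a ≤ ℓ)
    (g g' : G) (hg : g ∈ ann gen (ℓ : ℝ) (a : ℝ)) (hg' : g' ∈ ann gen (ℓ : ℝ) (a : ℝ))
    (hx : g * g' ∈ ann gen (2 * (ℓ : ℝ)) (4 * (a : ℝ)))
    (h : G)
    (hgeo : wordNorm gen h + wordNorm gen (h⁻¹ * (g * g')) = wordNorm gen (g * g'))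
    (hhalf : wordNorm gen h = ⌈(wordNorm gen (g * g') : ℝ) / 2⌉₊) :
    (wordNorm gen (g⁻¹ * h) : ℝ) ≤ 6 * a + 2 * δ ∧ g' = g⁻¹ * (g * g') := by
  refine ⟨?_, by group⟩
  exact statement10_aux gen hgen δ hδ hhyp ℓ a ha1 ha g g' h
    hg.1 (not_le.mp hg.2) hg'.1 hx.1 (not_le.mp hx.2) hgeo hhalf

end GrowthRQ
end
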